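/- Let p be a prime, l ≥ 1 and d ≥ 1 integers, and let f : ℤ_p → ℚ_p be a nonzero analytic function having no root in ℤ_p. Then: (i) the integer-valued sequence (ν_{p^l}(f(n)))_{n≥0} is purely periodic with some power of p as a period; (ii) if f is a polynomial, the sequence (ℒ_{p^l}(f(n)))_{n≥0} (values in the ℤ-module ℤ_p) is k-regular for every integer k ≥ 2; (iii) the sequence (ℓ_{p^l,d}(f(n)))_{n≥0} (values in ℤ/p^{ld}ℤ) is purely periodic with some power of p as a period. -/

import Mathlib

/-- The `k`-kernel of a sequence: the set of subsequences `n ↦ a (k^i·n + j)`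
for `i ≥ 0` and `0 ≤ j ≤ k^i - 1`. -/
def kKernel {R : Type*} (k : ℕ) (a : ℕ → R) : Set (ℕ → R) :=
  {c | ∃ i j : ℕ, j < k ^ i ∧ c = fun n => a (k ^ i * n + j)}

/-- A sequence is `k`-automatic if its `k`-kernel is a finite set. -/
def IsKAutomatic {R : Type*} (k : ℕ) (a : ℕ → R) : Prop :=
  (kKernel k a).Finite

/-- A sequence with values in a `ℤ`-module is `k`-regular if the `ℤ`-submodule
of the module of all sequences generated by its `k`-kernel is finitely generated. -/
def IsKRegular {R : Type*} [AddCommGroup R] (k : ℕ) (a : ℕ → R) : Prop :=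
  (Submodule.span ℤ (kKernel k a)).FG

/-- `k` and `m` are multiplicatively independent if `k^a = m^b` forces `a = b = 0`. -/
def MultiplicativelyIndependent (k m : ℕ) : Prop :=
  ∀ a b : ℕ, k ^ a = m ^ b → a = 0 ∧ b = 0

/-- Strictly `k`-regular: `k`-regular but not `m`-regular for every `m ≥ 2`
multiplicatively independent of `k`. -/
def StrictlyKRegular {R : Type*} [AddCommGroup R] (k : ℕ) (a : ℕ → R) : Prop :=
  IsKRegular k a ∧ ∀ m : ℕ, 2 ≤ m → MultiplicativelyIndependent k m → ¬ IsKRegular m a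

/-- Strictly `k`-automatic: `k`-automatic but not `m`-automatic for every `m ≥ 2`
multiplicatively independent of `k`. -/
def StrictlyKAutomatic {R : Type*} (k : ℕ) (a : ℕ → R) : Prop :=
  IsKAutomatic k a ∧ ∀ m : ℕ, 2 ≤ m → MultiplicativelyIndependent k m → ¬ IsKAutomatic m a

/-- `f : ℤ_p → ℚ_p` is analytic if it is given by a power series converging
(to `f x`) at every point `x ∈ ℤ_p`. -/
def IsPadicAnalytic {p : ℕ} [Fact p.Prime] (f : ℤ_[p] → ℚ_[p]) : Prop :=
  ∃ c : ℕ → ℚ_[p], ∀ x : ℤ_[p], HasSum (fun i => c i * (x : ℚ_[p]) ^ i) (f x)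

/-- The set of roots of `f` in `ℤ_p`. -/
def padicRootSet {p : ℕ} [Fact p.Prime] (f : ℤ_[p] → ℚ_[p]) : Set ℤ_[p] :=
  {θ | f θ = 0}

/-- A `p`-adic integer is rational if it is the image of a rational number. -/
def IsRationalPadicInt {p : ℕ} [Fact p.Prime] (θ : ℤ_[p]) : Prop :=
  ∃ q : ℚ, (θ : ℚ_[p]) = (q : ℚ_[p])

/-- `θ` is a root of `f` of multiplicity `m`:
`f x = (x - θ)^m · g x` with `g` analytic and `g θ ≠ 0`. -/
def HasRootMultiplicity {p : ℕ} [Fact p.Prime] (f : ℤ_[p] → ℚ_[p]) (θ : ℤ_[p]) (m : ℕ) : Prop :=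
  ∃ g : ℤ_[p] → ℚ_[p], IsPadicAnalytic g ∧ g θ ≠ 0 ∧
    ∀ x : ℤ_[p], f x = ((x : ℚ_[p]) - (θ : ℚ_[p])) ^ m * g x

/-- `ν_{p^l}(x) = ⌊ν_p(x)/l⌋` (with junk value `0` at `x = 0`). -/
noncomputable def nuPow (p : ℕ) [Fact p.Prime] (l : ℕ) (x : ℚ_[p]) : ℤ :=
  x.valuation / (l : ℤ)

open Classical in
/-- `ℒ_{p^l}(x) = p^{-l·ν_{p^l}(x)}·x ∈ ℤ_p`, with `ℒ_{p^l}(0) = 0`. -/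
noncomputable def padicL (p : ℕ) [hp : Fact p.Prime] (l : ℕ) (x : ℚ_[p]) : ℤ_[p] :=
  if h : x = 0 ∨ l = 0 then 0
  else ⟨(p : ℚ_[p]) ^ (-((l : ℤ) * nuPow p l x)) * x, by
    push_neg at h
    obtain ⟨hx, hl⟩ := h
    have hp0 : (p : ℚ_[p]) ≠ 0 := Nat.cast_ne_zero.mpr hp.out.ne_zero
    have hz : (p : ℚ_[p]) ^ (-((l : ℤ) * nuPow p l x)) ≠ 0 := zpow_ne_zero _ hp0
    rw [Padic.norm_le_one_iff_val_nonneg, Padic.valuation_mul hz hx]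
    have hvz : ((p : ℚ_[p]) ^ (-((l : ℤ) * nuPow p l x))).valuation
        = -((l : ℤ) * nuPow p l x) := by
      have h1 : ‖(p : ℚ_[p]) ^ (-((l : ℤ) * nuPow p l x))‖
          = (p : ℝ) ^ (-(-((l : ℤ) * nuPow p l x))) := Padic.norm_p_zpow _
      rw [Padic.norm_eq_zpow_neg_valuation hz] at h1
      have h1p : 1 < (p : ℝ) := by exact_mod_cast hp.out.one_lt
      have := (zpow_right_strictMono₀ h1p).injective h1
      omega
    rw [hvz, nuPow]
    have hl' : (0 : ℤ) < (l : ℤ) := by exact_mod_cast Nat.pos_of_ne_zero hl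
    have := Int.emod_nonneg x.valuation (by exact_mod_cast hl : (l : ℤ) ≠ 0)
    have heq := Int.emod_add_mul_ediv x.valuation (l : ℤ)
    omega⟩

/-- `ℓ_{p^l,d}(x) = ℒ_{p^l}(x) mod p^{ld} ∈ ℤ/p^{ld}ℤ`. -/
noncomputable def padicEll (p : ℕ) [Fact p.Prime] (l d : ℕ) (x : ℚ_[p]) : ZMod (p ^ (l * d)) :=
  PadicInt.toZModPow (l * d) (padicL p l x)

/-- A sequence is eventually periodic. -/
def EventuallyPeriodic {R : Type*} (a : ℕ → R) : Prop :=
  ∃ T : ℕ, 1 ≤ T ∧ ∃ N : ℕ, ∀ n : ℕ, N ≤ n → a (n + T) = a n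


section AuxStatement12

variable {p : ℕ} [hp : Fact p.Prime]


lemma aux_val_eq_of_norm_eq {x y : ℚ_[p]} (hx : x ≠ 0) (hy : y ≠ 0) (h : ‖x‖ = ‖y‖) :
    x.valuation = y.valuation := by
  rw [Padic.norm_eq_zpow_neg_valuation hx, Padic.norm_eq_zpow_neg_valuation hy] at h
  have h1p : 1 < (p : ℝ) := by exact_mod_cast hp.out.one_lt
  have := (zpow_right_strictMono₀ h1p).injective h
  omega

lemma aux_pow_sub_pow_norm_le (x y : ℤ_[p]) (i : ℕ) : ‖x ^ i - y ^ i‖ ≤ ‖x - y‖ := by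
  rw [← geom_sum₂_mul x y i, norm_mul]
  calc ‖∑ m ∈ Finset.range i, x ^ m * y ^ (i - 1 - m)‖ * ‖x - y‖
      ≤ 1 * ‖x - y‖ := by
        apply mul_le_mul_of_nonneg_right (PadicInt.norm_le_one _) (norm_nonneg _)
    _ = ‖x - y‖ := one_mul _

lemma aux_lipschitz {f : ℤ_[p] → ℚ_[p]} (hfa : IsPadicAnalytic f) :
    ∃ C : ℝ, 0 ≤ C ∧ ∀ x y : ℤ_[p], ‖f x - f y‖ ≤ C * ‖x - y‖ := by
  obtain ⟨c, hc⟩ := hfa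
  have hsum : Summable c := by
    have := (hc 1).summable
    simpa using this
  have htend : Filter.Tendsto (fun i => ‖c i‖) Filter.atTop (nhds 0) :=
    hsum.tendsto_atTop_zero.norm.congr (by simp) |>.mono_right (by simp) |>.congr (fun _ => rfl)
  have hbdd : BddAbove (Set.range fun i => ‖c i‖) := htend.bddAbove_range
  refine ⟨⨆ i, ‖c i‖, le_trans (norm_nonneg (c 0)) (le_ciSup hbdd 0), fun x y => ?_⟩
  have hx := hc x
  have hy := hc y
  have hsub := hx.sub hy
  rw [← hsub.tsum_eq]
  apply IsUltrametricDist.norm_tsum_le_of_forall_le_of_nonneg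
    (mul_nonneg (le_trans (norm_nonneg (c 0)) (le_ciSup hbdd 0)) (norm_nonneg _))
  intro i
  have : c i * (x : ℚ_[p]) ^ i - c i * (y : ℚ_[p]) ^ i
      = c i * (((x ^ i - y ^ i : ℤ_[p]) : ℚ_[p])) := by push_cast; ring
  rw [this, norm_mul, ← PadicInt.norm_def]
  apply mul_le_mul (le_ciSup hbdd i) (aux_pow_sub_pow_norm_le x y i) (norm_nonneg _)
    (le_trans (norm_nonneg (c 0)) (le_ciSup hbdd 0))

lemma aux_min_norm {f : ℤ_[p] → ℚ_[p]} (hfa : IsPadicAnalytic f)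
    (hroot : ∀ θ : ℤ_[p], f θ ≠ 0) :
    ∃ ε : ℝ, 0 < ε ∧ ∀ x : ℤ_[p], ε ≤ ‖f x‖ := by
  obtain ⟨C, hC0, hC⟩ := aux_lipschitz hfa
  have hcont : Continuous f := by
    have : LipschitzWith (Real.toNNReal C) f := by
      apply LipschitzWith.of_dist_le_mul
      intro x y
      rw [dist_eq_norm, dist_eq_norm]
      calc ‖f x - f y‖ ≤ C * ‖x - y‖ := hC x y
        _ ≤ Real.toNNReal C * ‖x - y‖ := by
            apply mul_le_mul_of_nonneg_right (Real.le_coe_toNNReal C) (norm_nonneg _)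
    exact this.continuous
  obtain ⟨x₀, -, hmin⟩ := isCompact_univ.exists_isMinOn (Set.univ_nonempty)
    ((continuous_norm.comp hcont).continuousOn (s := Set.univ))
  refine ⟨‖f x₀‖, norm_pos_iff.mpr (hroot x₀), fun x => hmin (Set.mem_univ x)⟩

lemma aux_key {f : ℤ_[p] → ℚ_[p]} (hfa : IsPadicAnalytic f)
    (hroot : ∀ θ : ℤ_[p], f θ ≠ 0) (M : ℕ) :
    ∃ t : ℕ, ∀ x y : ℤ_[p], ‖x - y‖ ≤ (p : ℝ) ^ (-(t : ℤ)) →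
      ‖f x - f y‖ ≤ (p : ℝ) ^ (-(M : ℤ)) * ‖f x‖ := by
  obtain ⟨C, hC0, hC⟩ := aux_lipschitz hfa
  obtain ⟨ε, hε, hmin⟩ := aux_min_norm hfa hroot
  have hp1 : (1 : ℝ) < p := by exact_mod_cast hp.out.one_lt
  have hppos : (0 : ℝ) < p := lt_trans one_pos hp1
  obtain ⟨t, ht⟩ : ∃ t : ℕ, C * (p : ℝ) ^ (-(t : ℤ)) ≤ (p : ℝ) ^ (-(M : ℤ)) * ε := by
    rcases eq_or_lt_of_le hC0 with h | h
    · exact ⟨0, by rw [← h, zero_mul]; positivity⟩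
    · obtain ⟨t, ht⟩ := exists_pow_lt_of_lt_one
        (show (0:ℝ) < ((p : ℝ) ^ (-(M : ℤ)) * ε) / C by positivity)
        (show (p:ℝ)⁻¹ < 1 by rw [inv_lt_one_iff₀]; right; exact hp1)
      refine ⟨t, ?_⟩
      have : (p : ℝ) ^ (-(t : ℤ)) = ((p:ℝ)⁻¹) ^ t := by
        rw [zpow_neg, zpow_natCast, inv_pow]
      rw [this]
      rw [mul_comm]
      exact (lt_div_iff₀ h).mp ht |>.le
  refine ⟨t, fun x y hxy => ?_⟩
  calc ‖f x - f y‖ ≤ C * ‖x - y‖ := hC x y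
    _ ≤ C * (p : ℝ) ^ (-(t : ℤ)) := mul_le_mul_of_nonneg_left hxy hC0
    _ ≤ (p : ℝ) ^ (-(M : ℤ)) * ε := ht
    _ ≤ (p : ℝ) ^ (-(M : ℤ)) * ‖f x‖ := by
        apply mul_le_mul_of_nonneg_left (hmin x) (by positivity)

lemma aux_norm_eq {f : ℤ_[p] → ℚ_[p]} (hroot : ∀ θ : ℤ_[p], f θ ≠ 0) {M : ℕ} (hM : 1 ≤ M)
    {x y : ℤ_[p]} (h : ‖f x - f y‖ ≤ (p : ℝ) ^ (-(M : ℤ)) * ‖f x‖) :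
    ‖f x‖ = ‖f y‖ := by
  have hp1 : (1 : ℝ) < p := by exact_mod_cast hp.out.one_lt
  have hfx : 0 < ‖f x‖ := norm_pos_iff.mpr (hroot x)
  have hlt1 : (p : ℝ) ^ (-(M : ℤ)) < 1 := by
    apply zpow_lt_one_of_neg₀ hp1
    omega
  have hsm : ‖f x - f y‖ < ‖f x‖ := lt_of_le_of_lt h (by nlinarith)
  have h1 : ‖f y‖ ≤ max ‖f x‖ ‖f x - f y‖ := by
    have := IsUltrametricDist.norm_add_le_max (f x) (-(f x - f y))
    simpa [norm_sub_rev (f y) (f x)] using this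
  have h2 : ‖f x‖ ≤ max ‖f y‖ ‖f x - f y‖ := by
    have := IsUltrametricDist.norm_add_le_max (f y) (f x - f y)
    simpa [add_sub_cancel] using this
  rcases max_cases ‖f y‖ ‖f x - f y‖ with ⟨he, _⟩ | ⟨he, _⟩ <;>
    rcases max_cases ‖f x‖ ‖f x - f y‖ with ⟨he', _⟩ | ⟨he', _⟩ <;>
      rw [he] at h2 <;> rw [he'] at h1 <;> linarith

lemma aux_fg_of_le_span {Mo : Type*} [AddCommGroup Mo] {N : Submodule ℤ Mo} {S : Set Mo}
    (hS : S.Finite) (h : N ≤ Submodule.span ℤ S) : N.FG := by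
  have hfg : (Submodule.span ℤ S).FG := ⟨hS.toFinset, by rw [Set.Finite.coe_toFinset]⟩
  haveI : IsNoetherian ℤ (Submodule.span ℤ S) := isNoetherian_of_fg_of_noetherian _ hfg
  have h2 : (Submodule.comap (Submodule.span ℤ S).subtype N).FG := IsNoetherian.noetherian _
  have h3 := h2.map (Submodule.span ℤ S).subtype
  rwa [Submodule.map_comap_subtype, inf_of_le_right h] at h3

lemma padicL_coe_eq {p : ℕ} [hp : Fact p.Prime] {l : ℕ} (hl : l ≠ 0) {x : ℚ_[p]} (hx : x ≠ 0) :
    ((padicL p l x : ℤ_[p]) : ℚ_[p]) = (p : ℚ_[p]) ^ (-((l : ℤ) * nuPow p l x)) * x := by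
  have h : ¬(x = 0 ∨ l = 0) := by tauto
  unfold padicL
  exact congrArg (fun z : ℤ_[p] => (z : ℚ_[p])) (dif_neg h)

end AuxStatement12


/-- If the nonzero analytic `f` has no root in `ℤ_p` then
`(ν_{p^l}(f(n)))_n` and `(ℓ_{p^l,d}(f(n)))_n` are purely periodic with a power of `p`
as a period, and for polynomial `f` the sequence `(ℒ_{p^l}(f(n)))_n` is `k`-regular
for every `k ≥ 2`. -/
theorem statement12 (p : ℕ) [Fact p.Prime] (l d : ℕ) (hl : 1 ≤ l) (hd : 1 ≤ d)
    (f : ℤ_[p] → ℚ_[p]) (hfa : IsPadicAnalytic f) (hf0 : f ≠ 0)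
    (hroot : ∀ θ : ℤ_[p], f θ ≠ 0) :
    (∃ t : ℕ, ∀ n : ℕ,
      nuPow p l (f ((n + p ^ t : ℕ) : ℤ_[p])) = nuPow p l (f (n : ℤ_[p]))) ∧
    ((∃ F : Polynomial ℚ_[p], ∀ x : ℤ_[p], f x = F.eval (x : ℚ_[p])) →
      ∀ k : ℕ, 2 ≤ k → IsKRegular k (fun n : ℕ => padicL p l (f (n : ℤ_[p])))) ∧
    (∃ t : ℕ, ∀ n : ℕ,
      padicEll p l d (f ((n + p ^ t : ℕ) : ℤ_[p])) = padicEll p l d (f (n : ℤ_[p]))) := by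
  have hp1R : (1 : ℝ) < p := by exact_mod_cast (Fact.out : p.Prime).one_lt
  have hpposR : (0 : ℝ) < p := lt_trans one_pos hp1R
  have hlne : l ≠ 0 := by omega
  have hlz : (l : ℤ) ≠ 0 := by exact_mod_cast hlne
  have hM1 : 1 ≤ l * d := Nat.one_le_iff_ne_zero.mpr (by positivity)
  obtain ⟨t, ht⟩ := aux_key hfa hroot (l * d)
  have hnormeq : ∀ x y : ℤ_[p], ‖x - y‖ ≤ (p : ℝ) ^ (-(t : ℤ)) → ‖f x‖ = ‖f y‖ :=
    fun x y h => aux_norm_eq hroot hM1 (ht x y h)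
  have hvaleq : ∀ x y : ℤ_[p], ‖x - y‖ ≤ (p : ℝ) ^ (-(t : ℤ)) →
      (f x).valuation = (f y).valuation :=
    fun x y h => aux_val_eq_of_norm_eq (hroot x) (hroot y) (hnormeq x y h)
  have hnueq : ∀ x y : ℤ_[p], ‖x - y‖ ≤ (p : ℝ) ^ (-(t : ℤ)) →
      nuPow p l (f x) = nuPow p l (f y) := by
    intro x y h
    unfold nuPow
    rw [hvaleq x y h]
  have hclose : ∀ n : ℕ, ‖(((n + p ^ t : ℕ) : ℤ_[p])) - ((n : ℕ) : ℤ_[p])‖ ≤ (p : ℝ) ^ (-(t : ℤ)) := by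
    intro n
    have hd : (((n + p ^ t : ℕ) : ℤ_[p])) - ((n : ℕ) : ℤ_[p]) = (p : ℤ_[p]) ^ t := by
      push_cast; ring
    rw [hd, PadicInt.norm_p_pow]
  refine ⟨⟨t, fun n => hnueq _ _ (hclose n)⟩, ?_, ⟨t, fun n => ?_⟩⟩
  · -- part (ii): k-regularity in the polynomial case
    rintro ⟨F, hF⟩ k hk
    set P := p ^ t with hPdef
    have hPpos : 0 < P := pow_pos (Fact.out : p.Prime).pos t
    have hper : ∀ n : ℕ, nuPow p l (f ((n : ℕ) : ℤ_[p]))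
        = nuPow p l (f ((n % P : ℕ) : ℤ_[p])) := by
      intro n
      apply hnueq
      have hdiff : ((n : ℕ) : ℤ_[p]) - ((n % P : ℕ) : ℤ_[p])
          = ((P : ℕ) : ℤ_[p]) * ((n / P : ℕ) : ℤ_[p]) := by
        have h1 : ((P * (n / P) + n % P : ℕ) : ℤ_[p]) = ((n : ℕ) : ℤ_[p]) := by
          rw [Nat.div_add_mod]
        push_cast at h1
        linear_combination -h1
      have hnP : ‖((P : ℕ) : ℤ_[p])‖ = (p : ℝ) ^ (-(t : ℤ)) := by
        rw [hPdef]; push_cast; exact PadicInt.norm_p_pow t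
      rw [hdiff, norm_mul, hnP]
      calc (p : ℝ) ^ (-(t : ℤ)) * ‖((n / P : ℕ) : ℤ_[p])‖
          ≤ (p : ℝ) ^ (-(t : ℤ)) * 1 :=
            mul_le_mul_of_nonneg_left (PadicInt.norm_le_one _) (by positivity)
        _ = (p : ℝ) ^ (-(t : ℤ)) := mul_one _
    set c : ℕ → ℚ_[p] :=
      fun r => (p : ℚ_[p]) ^ (-((l : ℤ) * nuPow p l (f ((r : ℕ) : ℤ_[p])))) with hcdef
    have hA : ∀ n : ℕ, ((padicL p l (f ((n : ℕ) : ℤ_[p])) : ℤ_[p]) : ℚ_[p])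
        = c (n % P) * f ((n : ℕ) : ℤ_[p]) := by
      intro n
      rw [padicL_coe_eq hlne (hroot _), hper n]
    set D := F.natDegree with hDdef
    set g : ℕ → ℕ → ℕ → ℕ → (ℕ → ℚ_[p]) := fun u r s s' => fun n =>
      if n % P = u then c r * F.coeff s * ((n : ℕ) : ℚ_[p]) ^ s' else 0 with hgdef
    set S : Set (ℕ → ℚ_[p]) :=
      (fun q : (ℕ × ℕ) × ℕ × ℕ => g q.1.1 q.1.2 q.2.1 q.2.2) ''
        (((Finset.range P ×ˢ Finset.range P) ×ˢ
          Finset.range (D + 1) ×ˢ Finset.range (D + 1) : Finset ((ℕ × ℕ) × ℕ × ℕ)) : Set _)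
      with hSdef
    have hSfin : S.Finite := Set.Finite.image _ (Finset.finite_toSet _)
    set L : (ℕ → ℤ_[p]) →ₗ[ℤ] (ℕ → ℚ_[p]) :=
      ((PadicInt.Coe.ringHom (p := p)).toAddMonoidHom.toIntLinearMap).compLeft ℕ with hLdef
    have hLinj : Function.Injective L := by
      intro g1 g2 hgg
      funext n
      exact Subtype.coe_injective (congrFun hgg n)
    apply Submodule.fg_of_fg_map_injective L hLinj
    rw [Submodule.map_span]
    apply aux_fg_of_le_span hSfin
    rw [Submodule.span_le]
    rintro _ ⟨b, hb, rfl⟩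
    obtain ⟨i, j, hj, rfl⟩ := hb
    have hLb : L (fun n => padicL p l (f ((k ^ i * n + j : ℕ) : ℤ_[p])))
        = fun n => ((padicL p l (f ((k ^ i * n + j : ℕ) : ℤ_[p])) : ℤ_[p]) : ℚ_[p]) := rfl
    have hfun : (fun n => ((padicL p l (f ((k ^ i * n + j : ℕ) : ℤ_[p])) : ℤ_[p]) : ℚ_[p]))
        = ∑ u ∈ Finset.range P, ∑ s ∈ Finset.range (D + 1), ∑ s' ∈ Finset.range (D + 1),
            ((s.choose s' * k ^ (i * s') * j ^ (s - s') : ℤ)) • g u ((k ^ i * u + j) % P) s s' := by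
      funext n
      simp only [Finset.sum_apply, Pi.smul_apply]
      rw [hA]
      have hmod : (k ^ i * n + j) % P = (k ^ i * (n % P) + j) % P :=
        (Nat.ModEq.add_right j (Nat.ModEq.mul_left (k ^ i) (Nat.mod_modEq n P))).symm
      rw [hmod, hF]
      have hX : (((k ^ i * n + j : ℕ) : ℤ_[p]) : ℚ_[p])
          = (k : ℚ_[p]) ^ i * ((n : ℕ) : ℚ_[p]) + (j : ℚ_[p]) := by push_cast; ring
      rw [hX]
      rw [Finset.sum_eq_single_of_mem (n % P) (Finset.mem_range.mpr (Nat.mod_lt n hPpos))]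
      rotate_left
      · intro u hu hune
        apply Finset.sum_eq_zero; intro s hs
        apply Finset.sum_eq_zero; intro s' hs'
        rw [hgdef]
        simp only [if_neg (Ne.symm hune)]
        simp
      simp only [hgdef, eq_self_iff_true, if_true, zsmul_eq_mul]
      rw [Polynomial.eval_eq_sum_range, Finset.mul_sum]
      apply Finset.sum_congr rfl
      intro s hs
      have hsD : s ≤ D := Nat.lt_succ_iff.mp (Finset.mem_range.mp hs)
      have hpow : ((k : ℚ_[p]) ^ i * ((n : ℕ) : ℚ_[p]) + ((j : ℕ) : ℚ_[p])) ^ s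
          = ∑ m ∈ Finset.range (D + 1),
              ((s.choose m * k ^ (i * m) * j ^ (s - m) : ℤ) : ℚ_[p]) * ((n : ℕ) : ℚ_[p]) ^ m := by
        have hzero : ∀ m ∈ Finset.range (D + 1), m ∉ Finset.range (s + 1) →
            ((k : ℚ_[p]) ^ i * ((n : ℕ) : ℚ_[p])) ^ m * ((j : ℕ) : ℚ_[p]) ^ (s - m)
              * ((s.choose m : ℕ) : ℚ_[p]) = 0 := by
          intro m hm hnm
          have hlt : s < m := by
            simp only [Finset.mem_range] at hm hnm
            omega
          simp [Nat.choose_eq_zero_of_lt hlt]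
        rw [add_pow, Finset.sum_subset (Finset.range_subset_range.mpr
          (by omega : s + 1 ≤ D + 1)) hzero]
        apply Finset.sum_congr rfl
        intro m hm
        push_cast
        ring
      rw [hpow, Finset.mul_sum, Finset.mul_sum]
      apply Finset.sum_congr rfl
      intro m hm
      ring
    rw [hLb, hfun]
    apply Submodule.sum_mem; intro u hu
    apply Submodule.sum_mem; intro s hs
    apply Submodule.sum_mem; intro s' hs'
    apply Submodule.smul_mem
    apply Submodule.subset_span
    rw [hSdef]
    refine ⟨((u, (k ^ i * u + j) % P), s, s'), ?_, rfl⟩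
    simp only [Finset.coe_sort_coe, Finset.mem_coe, Finset.mem_product, Finset.mem_range]
    exact ⟨⟨Finset.mem_range.mp hu, Nat.mod_lt _ hPpos⟩, Finset.mem_range.mp hs, Finset.mem_range.mp hs'⟩
  · -- part (iii)
    set x := ((n + p ^ t : ℕ) : ℤ_[p]) with hxdef
    set y := ((n : ℕ) : ℤ_[p]) with hydef
    have hm : nuPow p l (f x) = nuPow p l (f y) := hnueq _ _ (hclose n)
    have hnorm : ‖padicL p l (f x) - padicL p l (f y)‖ ≤ (p : ℝ) ^ (-((l * d : ℕ) : ℤ)) := by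
      rw [PadicInt.norm_def]
      push_cast [padicL_coe_eq hlne (hroot x), padicL_coe_eq hlne (hroot y), hm]
      set m : ℤ := (l : ℤ) * nuPow p l (f y) with hmdef
      have hfac : (p : ℚ_[p]) ^ (-m) * f x - (p : ℚ_[p]) ^ (-m) * f y
          = (p : ℚ_[p]) ^ (-m) * (f x - f y) := by ring
      rw [hfac, norm_mul, Padic.norm_p_zpow, neg_neg]
      have hb := ht x y (hclose n)
      have hν : ‖f x‖ = (p : ℝ) ^ (-(f y).valuation) := by
        rw [hnormeq x y (hclose n), Padic.norm_eq_zpow_neg_valuation (hroot y)]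
      have hmlev : m ≤ (f y).valuation := by
        have h1 := Int.mul_ediv_add_emod (f y).valuation (l : ℤ)
        have h2 := Int.emod_nonneg (f y).valuation hlz
        have hnu : nuPow p l (f y) = (f y).valuation / (l : ℤ) := rfl
        rw [hmdef, hnu]
        linarith
      calc (p : ℝ) ^ m * ‖f x - f y‖
          ≤ (p : ℝ) ^ m * ((p : ℝ) ^ (-((l * d : ℕ) : ℤ)) * ‖f x‖) :=
            mul_le_mul_of_nonneg_left hb (by positivity)
        _ = (p : ℝ) ^ (m + (-((l * d : ℕ) : ℤ) + -(f y).valuation)) := by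
            rw [hν, ← zpow_add₀ (ne_of_gt hpposR), ← zpow_add₀ (ne_of_gt hpposR)]
        _ ≤ (p : ℝ) ^ (-((l * d : ℕ) : ℤ)) := zpow_le_zpow_right₀ hp1R.le (by linarith)
    have hmem : padicL p l (f x) - padicL p l (f y) ∈ Ideal.span {(p : ℤ_[p]) ^ (l * d)} :=
      (PadicInt.norm_le_pow_iff_mem_span_pow _ _).mp hnorm
    unfold padicEll
    rw [← RingHom.sub_mem_ker_iff, PadicInt.ker_toZModPow]
    exact hmem
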